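/- If E is a local stochastic error of rate p on n qubits and W: Paulis → Paulis is a function such that the support of W(E) is contained in the union of the supports of at most c sets each of which is the image of supp(E) under a map where each output coordinate depends on at most c input coordinates and each input coordinate affects at most c output coordinates, then W(E) is local stochastic with rate c^2 · p^{1/c} (propagation of local stochastic noise through bounded-fan-in/fan-out maps). Specifically: if f: [m] → finset [n] with |f(j)| ≤ c for all j and each i ∈ [n] lies in f(j) for at most c values of j, and F = {j : f(j) ∩ E ≠ ∅}, then for all S ⊆ [m], P[S ⊆ F] ≤ (c·p)^{|S|/c}. -/

import Mathlib

open scoped Classical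

private lemma sum_biUnion_le' {α β : Type*} (s : Finset β)
    (B : β → Finset α) (w : α → ℝ) (hw : ∀ a, 0 ≤ w a) :
    ∑ a ∈ s.biUnion B, w a ≤ ∑ b ∈ s, ∑ a ∈ B b, w a := by
  classical
  induction s using Finset.induction with
  | empty => simp
  | @insert b s hb ih =>
    rw [Finset.biUnion_insert, Finset.sum_insert hb]
    calc ∑ a ∈ B b ∪ s.biUnion B, w a
        ≤ ∑ a ∈ B b, w a + ∑ a ∈ s.biUnion B, w a := by
          rw [← Finset.sum_union_inter]
          have : 0 ≤ ∑ a ∈ B b ∩ s.biUnion B, w a :=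
            Finset.sum_nonneg (fun a _ => hw a)
          linarith
      _ ≤ ∑ a ∈ B b, w a + ∑ b ∈ s, ∑ a ∈ B b, w a := add_le_add_right ih _

private lemma union_bound {α β : Type*} (s : Finset β)
    (A : Finset α) (B : β → Finset α) (w : α → ℝ) (hw : ∀ a, 0 ≤ w a)
    (h : ∀ a ∈ A, ∃ b ∈ s, a ∈ B b) :
    ∑ a ∈ A, w a ≤ ∑ b ∈ s, ∑ a ∈ B b, w a := by
  classical
  have h1 : ∑ a ∈ A, w a ≤ ∑ a ∈ s.biUnion B, w a := by
    apply Finset.sum_le_sum_of_subset_of_nonneg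
    · intro a ha; simpa [Finset.mem_biUnion] using h a ha
    · intros; exact hw _
  exact h1.trans (sum_biUnion_le' s B w hw)

theorem stmt_2 {Ω : Type*} [Fintype Ω] (w : Ω → ℝ)
    (hw : ∀ ω, 0 ≤ w ω) (hsum : ∑ ω, w ω = 1)
    (n m c : ℕ) (hc : 0 < c) (p : ℝ) (hp0 : 0 ≤ p)
    (E : Ω → Finset (Fin n))
    (hls : ∀ S : Finset (Fin n),
      ∑ ω ∈ Finset.univ.filter (fun ω => S ⊆ E ω), w ω ≤ p ^ S.card)
    (f : Fin m → Finset (Fin n))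
    (hfanin : ∀ j, (f j).card ≤ c)
    (hfanout : ∀ i : Fin n, (Finset.univ.filter (fun j => i ∈ f j)).card ≤ c)
    (T : Finset (Fin m)) :
    ∑ ω ∈ Finset.univ.filter
        (fun ω => T ⊆ Finset.univ.filter (fun j => ((f j) ∩ E ω).Nonempty)), w ω
      ≤ (c * p) ^ (⌈(T.card : ℝ) / c⌉₊) := by
  -- key induction
  have key : ∀ (k : ℕ) (S : Finset (Fin n)) (T : Finset (Fin m)),
      (∀ j ∈ T, ∀ i ∈ S, i ∉ f j) →
      (k = 0 ∨ (k - 1) * c < T.card) →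
      ∑ ω ∈ Finset.univ.filter
          (fun ω => S ⊆ E ω ∧
            T ⊆ Finset.univ.filter (fun j => ((f j) ∩ E ω).Nonempty)), w ω
        ≤ p ^ S.card * (c * p) ^ k := by
    intro k
    induction k with
    | zero =>
      intro S T _ _
      rw [pow_zero, mul_one]
      refine le_trans ?_ (hls S)
      apply Finset.sum_le_sum_of_subset_of_nonneg
      · intro ω hω
        simp only [Finset.mem_filter] at hω ⊢
        exact ⟨hω.1, hω.2.1⟩
      · intros; exact hw _
    | succ k ih =>
      intro S T hinv hcard
      have hkc : k * c < T.card := by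
        rcases hcard with h0 | h; · exact absurd h0 (Nat.succ_ne_zero k)
        simpa using h
      have hT : T.Nonempty := by
        rw [← Finset.card_pos]; omega
      obtain ⟨j, hj⟩ := hT
      set F : Ω → Finset (Fin m) :=
        fun ω => Finset.univ.filter (fun j => ((f j) ∩ E ω).Nonempty) with hF
      -- union bound over i ∈ f j
      have hub := union_bound (f j)
        (Finset.univ.filter (fun ω => S ⊆ E ω ∧ T ⊆ F ω))
        (fun i => Finset.univ.filter
          (fun ω => insert i S ⊆ E ω ∧
            (T.filter (fun j' => i ∉ f j')) ⊆ F ω)) w hw ?_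
      · refine hub.trans ?_
        have hbound : ∀ i ∈ f j,
            ∑ ω ∈ Finset.univ.filter
                (fun ω => insert i S ⊆ E ω ∧
                  (T.filter (fun j' => i ∉ f j')) ⊆ F ω), w ω
              ≤ p ^ (S.card + 1) * (c * p) ^ k := by
          intro i hi
          have hiS : i ∉ S := fun hiS => hinv j hj i hiS hi
          have hinv' : ∀ j' ∈ T.filter (fun j' => i ∉ f j'),
              ∀ i' ∈ insert i S, i' ∉ f j' := by
            intro j' hj' i' hi'
            simp only [Finset.mem_filter] at hj'
            rcases Finset.mem_insert.mp hi' with rfl | hi'S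
            · exact hj'.2
            · exact hinv j' hj'.1 i' hi'S
          have hcard' : k = 0 ∨ (k - 1) * c < (T.filter (fun j' => i ∉ f j')).card := by
            rcases Nat.eq_zero_or_pos k with rfl | hk
            · exact Or.inl rfl
            refine Or.inr ?_
            have hsplit := Finset.card_filter_add_card_filter_not
              (s := T) (p := fun j' => i ∉ f j')
            have hle : (T.filter (fun j' => ¬ i ∉ f j')).card ≤ c := by
              refine le_trans (Finset.card_le_card ?_) (hfanout i)
              intro j' hj'
              simp only [Finset.mem_filter, not_not] at hj' ⊢
              exact ⟨Finset.mem_univ _, hj'.2⟩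
            have hmul : (k - 1) * c + c = k * c := by
              cases k with
              | zero => omega
              | succ k => simp [Nat.succ_sub_one, Nat.succ_mul]
            omega
          have := ih (insert i S) (T.filter (fun j' => i ∉ f j')) hinv' hcard'
          rwa [Finset.card_insert_of_notMem hiS] at this
        calc ∑ i ∈ f j, ∑ ω ∈ Finset.univ.filter
                (fun ω => insert i S ⊆ E ω ∧
                  (T.filter (fun j' => i ∉ f j')) ⊆ F ω), w ω
            ≤ ∑ _i ∈ f j, p ^ (S.card + 1) * (c * p) ^ k :=
              Finset.sum_le_sum hbound
          _ = (f j).card * (p ^ (S.card + 1) * (c * p) ^ k) := by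
              rw [Finset.sum_const, nsmul_eq_mul]
          _ ≤ c * (p ^ (S.card + 1) * (c * p) ^ k) := by
              apply mul_le_mul_of_nonneg_right
              · exact_mod_cast hfanin j
              · positivity
          _ = p ^ S.card * (c * p) ^ (k + 1) := by ring
      · intro ω hω
        simp only [Finset.mem_filter] at hω
        obtain ⟨hSE, hTF⟩ := hω.2
        have hjF := hTF hj
        simp only [hF, Finset.mem_filter] at hjF
        obtain ⟨i, hi⟩ := hjF.2
        rw [Finset.mem_inter] at hi
        refine ⟨i, hi.1, ?_⟩
        simp only [Finset.mem_filter]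
        refine ⟨Finset.mem_univ _, ?_, ?_⟩
        · intro x hx
          rcases Finset.mem_insert.mp hx with rfl | hxS
          · exact hi.2
          · exact hSE hxS
        · exact fun x hx => hTF (Finset.mem_of_mem_filter x hx)
  -- apply key with S = ∅, k = ⌈T.card / c⌉
  set k := ⌈(T.card : ℝ) / c⌉₊ with hk
  have hcond : k = 0 ∨ (k - 1) * c < T.card := by
    rcases Nat.eq_zero_or_pos k with h0 | hkpos
    · exact Or.inl h0
    refine Or.inr ?_
    have h1 : ((k - 1 : ℕ) : ℝ) < (T.card : ℝ) / c := by
      rw [hk]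
      exact Nat.lt_ceil.mp (by omega)
    have h2 : ((k - 1 : ℕ) : ℝ) * c < (T.card : ℝ) :=
      (lt_div_iff₀ (by exact_mod_cast hc)).mp h1
    exact_mod_cast h2
  have := key k ∅ T (by simp) hcond
  simpa using this
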